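/- Let k be a field of characteristic zero and r(t) ∈ k(t) a non-constant rational function. Then deg(r) − 1 ≤ deg(r') ≤ 2·deg(r), where r' is the derivative of r with respect to t and deg(p/q) = max(deg p, deg q) for coprime p,q. -/

import Mathlib

open Polynomial

noncomputable def degR {k : Type*} [Field k] (r : RatFunc k) : ℕ :=
  max r.num.natDegree r.denom.natDegree

noncomputable def rderiv {k : Type*} [Field k] (r : RatFunc k) : RatFunc k :=
  (algebraMap (Polynomial k) (RatFunc k) (Polynomial.derivative r.num) *
      algebraMap (Polynomial k) (RatFunc k) r.denom -
    algebraMap (Polynomial k) (RatFunc k) r.num *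
      algebraMap (Polynomial k) (RatFunc k) (Polynomial.derivative r.denom)) /
  (algebraMap (Polynomial k) (RatFunc k) r.denom) ^ 2

section Aux
open UniqueFactorizationMonoid GCDMonoid
open scoped Classical

variable {k : Type*} [Field k] [CharZero k]

lemma aux_natDegree_deriv {f : k[X]} (hf : f.natDegree ≠ 0) :
    (derivative f).natDegree = f.natDegree - 1 :=
  natDegree_eq_of_degree_eq_some (degree_derivative_eq f (Nat.pos_of_ne_zero hf))

lemma aux_deriv_ne_zero {f : k[X]} (hf : f.natDegree ≠ 0) : derivative f ≠ 0 :=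
  fun h => hf (natDegree_eq_zero_of_derivative_eq_zero h)

lemma aux_dvd_of_prime_pow_dvd {a b : k[X]} (ha : a ≠ 0) (hb : b ≠ 0)
    (h : ∀ π : k[X], Prime π → ∀ n : ℕ, π ^ n ∣ a → π ^ n ∣ b) : a ∣ b := by
  classical
  rw [UniqueFactorizationMonoid.dvd_iff_normalizedFactors_le_normalizedFactors ha hb,
    Multiset.le_iff_count]
  intro π
  by_cases hπ : π ∈ normalizedFactors a
  · have hirr := irreducible_of_normalized_factor π hπ
    have hnorm := normalize_normalized_factor π hπ
    set n := (normalizedFactors a).count π with hn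
    have h1 : (n : ℕ∞) ≤ emultiplicity π a := by
      rw [le_emultiplicity_iff_replicate_le_normalizedFactors hirr ha, hnorm]
      exact Multiset.le_count_iff_replicate_le.mp le_rfl
    have h2 : π ^ n ∣ a := pow_dvd_of_le_emultiplicity h1
    have h3 : π ^ n ∣ b := h π hirr.prime n h2
    have h4 : (n : ℕ∞) ≤ emultiplicity π b := pow_dvd_iff_le_emultiplicity.mp h3
    rw [le_emultiplicity_iff_replicate_le_normalizedFactors hirr hb, hnorm] at h4
    exact Multiset.le_count_iff_replicate_le.mpr h4
  · simp [Multiset.count_eq_zero_of_notMem hπ]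

set_option linter.unusedSectionVars false
variable {k : Type*} [Field k] [CharZero k]

lemma aux_prime_natDegree_ne_zero {π : k[X]} (hπ : Prime π) : π.natDegree ≠ 0 := by
  intro h
  have := eq_C_of_natDegree_eq_zero h
  have hc : π.coeff 0 ≠ 0 := by
    intro h0
    exact hπ.ne_zero (by rw [this, h0, map_zero])
  exact hπ.not_unit (this ▸ (Polynomial.isUnit_C.mpr (isUnit_iff_ne_zero.mpr hc)))

lemma aux_deriv_mult {π q : k[X]} (hπ : Prime π) {e : ℕ} (he : 1 ≤ e)
    (h1 : π ^ e ∣ q) (h2 : ¬ π ^ (e + 1) ∣ q) :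
    π ^ (e - 1) ∣ derivative q ∧ ¬ π ^ e ∣ derivative q := by
  obtain ⟨e', rfl⟩ : ∃ e', e = e' + 1 := ⟨e - 1, (Nat.succ_pred_eq_of_pos he).symm⟩
  obtain ⟨u, rfl⟩ := h1
  have hπu : ¬ π ∣ u := by
    rintro ⟨v, rfl⟩
    exact h2 ⟨v, by ring⟩
  have hder : derivative (π ^ (e' + 1) * u) =
      π ^ e' * (C ((e' + 1 : ℕ) : k) * derivative π * u + π * derivative u) := by
    rw [derivative_mul, derivative_pow]
    simp only [Nat.add_sub_cancel]
    ring
  constructor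
  · rw [hder]
    simp only [Nat.add_sub_cancel]
    exact dvd_mul_right _ _
  · rintro ⟨w, hw⟩
    have hcancel : C ((e' + 1 : ℕ) : k) * derivative π * u + π * derivative u = π * w := by
      apply mul_left_cancel₀ (pow_ne_zero e' hπ.ne_zero)
      rw [← hder, hw]; ring
    have hdvd : π ∣ C ((e' + 1 : ℕ) : k) * derivative π * u := by
      have : C ((e' + 1 : ℕ) : k) * derivative π * u = π * w - π * derivative u := by
        rw [← hcancel]; ring
      rw [this]
      exact dvd_sub (dvd_mul_right _ _) (dvd_mul_right _ _)
    rcases (hπ.dvd_mul.mp hdvd) with h | h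
    · rcases (hπ.dvd_mul.mp h) with h' | h'
      · have : IsUnit (C ((e' + 1 : ℕ) : k)) :=
          Polynomial.isUnit_C.mpr (isUnit_iff_ne_zero.mpr (Nat.cast_ne_zero.mpr (Nat.succ_ne_zero e')))
        exact hπ.not_unit (isUnit_of_dvd_unit h' this)
      · have hd0 : derivative π ≠ 0 := aux_deriv_ne_zero (aux_prime_natDegree_ne_zero hπ)
        have := natDegree_le_of_dvd h' hd0
        have := natDegree_derivative_lt (aux_prime_natDegree_ne_zero hπ)
        omega
    · exact hπu h
open scoped Classical

set_option linter.unusedSectionVars false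
variable {k : Type*} [Field k] [CharZero k]

lemma aux_gcd_dvd_deriv {p q : k[X]} (hcop : IsCoprime p q) (hq : q.natDegree ≠ 0) :
    gcd (derivative p * q - p * derivative q) (q ^ 2) ∣ derivative q := by
  classical
  set N := derivative p * q - p * derivative q with hNdef
  have hq0 : q ≠ 0 := fun h => hq (h ▸ natDegree_zero)
  have hg0 : gcd N (q ^ 2) ≠ 0 := fun h =>
    pow_ne_zero 2 hq0 (((gcd_eq_zero_iff _ _).mp h).2)
  apply aux_dvd_of_prime_pow_dvd hg0 (aux_deriv_ne_zero hq)
  intro π hπ n hn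
  rcases Nat.eq_zero_or_pos n with rfl | hn1
  · simpa using one_dvd _
  have hπq : π ∣ q := hπ.dvd_of_dvd_pow
    (((dvd_pow_self π hn1.ne').trans hn).trans (gcd_dvd_right _ _))
  have hirr : Irreducible π := hπ.irreducible
  set e := (normalizedFactors q).count (normalize π) with he
  have hemul : emultiplicity π q = (e : ℕ∞) :=
    emultiplicity_eq_count_normalizedFactors hirr hq0
  have h1 : π ^ e ∣ q := pow_dvd_of_le_emultiplicity (le_of_eq hemul.symm)
  have h2 : ¬ π ^ (e + 1) ∣ q := by
    intro h
    have := pow_dvd_iff_le_emultiplicity.mp h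
    rw [hemul, Nat.cast_le] at this
    omega
  have he1 : 1 ≤ e := by
    have := pow_dvd_iff_le_emultiplicity.mp (by simpa using hπq : π ^ 1 ∣ q)
    rw [hemul, Nat.cast_le] at this
    exact this
  obtain ⟨hd1, hd2⟩ := aux_deriv_mult hπ he1 h1 h2
  have hne : n ≤ e - 1 := by
    by_contra hcon
    have hen : e ≤ n := by omega
    have hπe : π ^ e ∣ N := (pow_dvd_pow π hen).trans (hn.trans (gcd_dvd_left _ _))
    have hπe2 : π ^ e ∣ p * derivative q := by
      have h3 : π ^ e ∣ derivative p * q := Dvd.dvd.mul_left h1 _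
      have : p * derivative q = derivative p * q - N := by rw [hNdef]; ring
      rw [this]
      exact dvd_sub h3 hπe
    have hπp : ¬ π ∣ p := fun h => hπ.not_unit (hcop.isUnit_of_dvd' h hπq)
    exact hd2 (hπ.pow_dvd_of_dvd_mul_left e hπp hπe2)
  exact (pow_dvd_pow π hne).trans hd1

lemma aux_N_ne_zero {p q : k[X]} (hcop : IsCoprime p q) (hp0 : p ≠ 0)
    (hnc : ¬(p.natDegree = 0 ∧ q.natDegree = 0)) :
    derivative p * q - p * derivative q ≠ 0 := by
  intro h
  have h' : derivative p * q = p * derivative q := sub_eq_zero.mp h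
  have hpd : p ∣ derivative p * q := h' ▸ dvd_mul_right p (derivative q)
  have hpd' : p ∣ derivative p := hcop.dvd_of_dvd_mul_right hpd
  have hp : p.natDegree = 0 := by
    by_contra hpn
    have h1 := natDegree_le_of_dvd hpd' (aux_deriv_ne_zero hpn)
    have h2 := natDegree_derivative_lt hpn
    omega
  have hdp : derivative p = 0 := derivative_of_natDegree_zero hp
  rw [hdp, zero_mul] at h'
  have hq' : derivative q = 0 := by
    rcases mul_eq_zero.mp h'.symm with h0 | h0
    · exact absurd h0 hp0
    · exact h0
  exact hnc ⟨hp, natDegree_eq_zero_of_derivative_eq_zero hq'⟩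

lemma aux_leadingCoeff_deriv {f : k[X]} (hf : f.natDegree ≠ 0) :
    (derivative f).leadingCoeff = f.leadingCoeff * (f.natDegree : k) := by
  have h : f.natDegree - 1 + 1 = f.natDegree := by omega
  rw [leadingCoeff, aux_natDegree_deriv hf, coeff_derivative, leadingCoeff, ← Nat.cast_succ,
    Nat.succ_eq_add_one, h]

end Aux

theorem stmt_1 {k : Type*} [Field k] [CharZero k]
    (r : RatFunc k) (hr : ∀ c : k, r ≠ RatFunc.C c) :
    degR r - 1 ≤ degR (rderiv r) ∧ degR (rderiv r) ≤ 2 * degR r := by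
  classical
  set p := r.num with hpdef
  set q := r.denom with hqdef
  have hmon : q.Monic := r.monic_denom
  have hq0 : q ≠ 0 := hmon.ne_zero
  have hr0 : r ≠ 0 := by
    intro h
    exact hr 0 (by rw [h, map_zero])
  have hp0 : p ≠ 0 := RatFunc.num_ne_zero hr0
  have hcop : IsCoprime p q := r.isCoprime_num_denom
  have hnc : ¬(p.natDegree = 0 ∧ q.natDegree = 0) := by
    rintro ⟨hpc, hqc⟩
    have hq1 : q = 1 := hmon.natDegree_eq_zero.mp hqc
    refine hr (p.coeff 0) ?_
    rw [← r.num_div_denom, ← hpdef, ← hqdef, hq1, eq_C_of_natDegree_eq_zero hpc]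
    simp [RatFunc.algebraMap_C]
  set N := derivative p * q - p * derivative q with hNdef
  have hN0 : N ≠ 0 := aux_N_ne_zero hcop hp0 hnc
  have hrd : rderiv r = algebraMap k[X] (RatFunc k) N /
      algebraMap k[X] (RatFunc k) (q ^ 2) := by
    rw [rderiv, hNdef, map_sub, map_mul, map_mul, map_pow]
  have hNle : N.natDegree ≤ p.natDegree + q.natDegree := by
    refine (natDegree_sub_le _ _).trans (max_le ?_ ?_)
    · exact natDegree_mul_le.trans
        (add_le_add_left ((natDegree_derivative_le p).trans (Nat.sub_le _ _)) _)
    · exact natDegree_mul_le.trans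
        (add_le_add_right ((natDegree_derivative_le q).trans (Nat.sub_le _ _)) _)
  by_cases hq1 : q.natDegree = 0
  · -- q = 1
    have hqone : q = 1 := hmon.natDegree_eq_zero.mp hq1
    have hdp0 : p.natDegree ≠ 0 := fun h => hnc ⟨h, hq1⟩
    have hNp : N = derivative p := by
      rw [hNdef, hqone]; simp
    have hrd2 : rderiv r = algebraMap k[X] (RatFunc k) (derivative p) := by
      rw [hrd, hNp, hqone]; simp
    have hnum : (rderiv r).num = derivative p := by rw [hrd2, RatFunc.num_algebraMap]
    have hden : (rderiv r).denom = 1 := by rw [hrd2, RatFunc.denom_algebraMap]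
    have hdd : (derivative p).natDegree = p.natDegree - 1 := aux_natDegree_deriv hdp0
    constructor
    · show max p.natDegree q.natDegree - 1 ≤ max (rderiv r).num.natDegree (rderiv r).denom.natDegree
      rw [hnum, hden, hdd, natDegree_one, hq1]
      omega
    · show max (rderiv r).num.natDegree (rderiv r).denom.natDegree ≤ 2 * max p.natDegree q.natDegree
      rw [hnum, hden, hdd, natDegree_one, hq1]
      omega
  · -- deg q ≥ 1
    set g := gcd N (q ^ 2) with hgdef
    have hgN : g ∣ N := gcd_dvd_left _ _
    have hgq2 : g ∣ q ^ 2 := gcd_dvd_right _ _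
    have hq2ne : q ^ 2 ≠ 0 := pow_ne_zero 2 hq0
    have hg0 : g ≠ 0 := fun h => hq2ne (((gcd_eq_zero_iff _ _).mp h).2)
    have hQg : q ^ 2 / g ≠ 0 := by
      intro h
      exact hq2ne (by rw [← EuclideanDomain.mul_div_cancel' hg0 hgq2, h, mul_zero])
    have hNg : N / g ≠ 0 := by
      intro h
      exact hN0 (by rw [← EuclideanDomain.mul_div_cancel' hg0 hgN, h, mul_zero])
    have hlc : ((q ^ 2 / g).leadingCoeff)⁻¹ ≠ 0 :=
      inv_ne_zero (leadingCoeff_ne_zero.mpr hQg)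
    have hnum : (rderiv r).num = C ((q ^ 2 / g).leadingCoeff)⁻¹ * (N / g) := by
      rw [hrd, RatFunc.num_div]
    have hden : (rderiv r).denom = C ((q ^ 2 / g).leadingCoeff)⁻¹ * (q ^ 2 / g) := by
      rw [hrd, RatFunc.denom_div _ hq2ne]
    have hNdeg : N.natDegree = g.natDegree + (N / g).natDegree := by
      conv_lhs => rw [← EuclideanDomain.mul_div_cancel' hg0 hgN]
      exact natDegree_mul hg0 hNg
    have hQdeg : 2 * q.natDegree = g.natDegree + (q ^ 2 / g).natDegree := by
      have : (q ^ 2).natDegree = 2 * q.natDegree := by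
        rw [natDegree_pow]
      conv_lhs => rw [← this, ← EuclideanDomain.mul_div_cancel' hg0 hgq2]
      exact natDegree_mul hg0 hQg
    have hnd : (rderiv r).num.natDegree = N.natDegree - g.natDegree := by
      rw [hnum, natDegree_C_mul hlc]; omega
    have hdd : (rderiv r).denom.natDegree = 2 * q.natDegree - g.natDegree := by
      rw [hden, natDegree_C_mul hlc]; omega
    have hgq' : g ∣ derivative q := aux_gcd_dvd_deriv hcop hq1
    have hgled : g.natDegree ≤ q.natDegree - 1 :=
      (natDegree_le_of_dvd hgq' (aux_deriv_ne_zero hq1)).trans (natDegree_derivative_le q)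
    constructor
    · -- lower bound
      show max p.natDegree q.natDegree - 1 ≤
        max (rderiv r).num.natDegree (rderiv r).denom.natDegree
      by_cases hle : p.natDegree ≤ q.natDegree
      · omega
      · -- deg p > deg q : compute exact degree of N
        have hdp0 : p.natDegree ≠ 0 := by omega
        have hdppos : 1 ≤ p.natDegree := by omega
        have hdqpos : 1 ≤ q.natDegree := by omega
        have e1 : p.natDegree - 1 + q.natDegree = p.natDegree + q.natDegree - 1 := by omega
        have e2 : p.natDegree + (q.natDegree - 1) = p.natDegree + q.natDegree - 1 := by omega
        have c1 : (derivative p * q).coeff (p.natDegree + q.natDegree - 1) =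
            p.leadingCoeff * (p.natDegree : k) * q.leadingCoeff := by
          rw [← e1]
          have h := coeff_mul_degree_add_degree (derivative p) q
          rw [aux_natDegree_deriv hdp0, aux_leadingCoeff_deriv hdp0] at h
          exact h
        have c2 : (p * derivative q).coeff (p.natDegree + q.natDegree - 1) =
            p.leadingCoeff * (q.leadingCoeff * (q.natDegree : k)) := by
          rw [← e2]
          have h := coeff_mul_degree_add_degree p (derivative q)
          rw [aux_natDegree_deriv hq1, aux_leadingCoeff_deriv hq1] at h
          exact h
        have hcoeff : N.coeff (p.natDegree + q.natDegree - 1) ≠ 0 := by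
          rw [hNdef, coeff_sub, c1, c2]
          have hval : p.leadingCoeff * (p.natDegree : k) * q.leadingCoeff -
              p.leadingCoeff * (q.leadingCoeff * (q.natDegree : k)) =
              p.leadingCoeff * q.leadingCoeff * ((p.natDegree : k) - (q.natDegree : k)) := by
            ring
          rw [hval]
          refine mul_ne_zero (mul_ne_zero ?_ ?_) ?_
          · exact leadingCoeff_ne_zero.mpr hp0
          · exact leadingCoeff_ne_zero.mpr hq0
          · rw [sub_ne_zero]
            exact fun h => (by omega : p.natDegree ≠ q.natDegree) (Nat.cast_injective h)
        have hNge : p.natDegree + q.natDegree - 1 ≤ N.natDegree :=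
          le_natDegree_of_ne_zero hcoeff
        omega
    · -- upper bound
      show max (rderiv r).num.natDegree (rderiv r).denom.natDegree ≤
        2 * max p.natDegree q.natDegree
      omega
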